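/- Let Σ₁,…,Σ_K ∈ ℝ^{n×n} be positive definite, let α₁,…,α_K ∈ (0,1] with Σᵢ αᵢ = 1, and let f : ℝⁿ → ℝ^K be measurable with each component f^i taking values in [0,1]. Define g_G^i(x) = Σⱼ αⱼ · E_{ε ~ N(0,Σⱼ)}[f^i(x + ε)] and set B⁻¹ = Σⱼ αⱼ Σⱼ⁻¹. Fix x ∈ ℝⁿ and let c_A maximize g_G^i(x) over i. Then for every δ ∈ ℝⁿ satisfying √(δᵀB⁻¹δ) ≤ (1/√(2π)) · (g_G^{c_A}(x) − max_{c ≠ c_A} g_G^c(x)), one has g_G^{c_A}(x + δ) ≥ g_G^c(x + δ) for every c ≠ c_A. -/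

import Mathlib

open MeasureTheory Matrix
open scoped ENNReal

/-- Density of the centered Gaussian `N(0, Σ)` on ℝⁿ (w.r.t. Lebesgue measure). -/
noncomputable def gaussDensity (n : ℕ) (Sig : Matrix (Fin n) (Fin n) ℝ)
    (ε : Fin n → ℝ) : ℝ :=
  (Real.sqrt ((2 * Real.pi) ^ n * Sig.det))⁻¹ * Real.exp (-(ε ⬝ᵥ (Sig⁻¹ *ᵥ ε)) / 2)

namespace GaussCertAux

lemma sqrt_pow' {x : ℝ} (hx : 0 ≤ x) (m : ℕ) : Real.sqrt (x ^ m) = (Real.sqrt x) ^ m := by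
  induction m with
  | zero => simp
  | succ k ih => rw [pow_succ, pow_succ, Real.sqrt_mul (pow_nonneg hx k), ih]

variable {n : ℕ} {S : Matrix (Fin n) (Fin n) ℝ}

lemma dotProduct_sum' {K : ℕ} (u : Fin n → ℝ) (w : Fin K → Fin n → ℝ) :
    u ⬝ᵥ (∑ j, w j) = ∑ j, u ⬝ᵥ w j := by
  simp only [dotProduct, Finset.sum_apply, Finset.mul_sum]
  exact Finset.sum_comm

lemma sum_mulVec' {K : ℕ} (A : Fin K → Matrix (Fin n) (Fin n) ℝ) (v : Fin n → ℝ) :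
    (∑ j, A j) *ᵥ v = ∑ j, A j *ᵥ v := by
  ext i
  simp only [Matrix.mulVec, dotProduct, Finset.sum_apply, Matrix.sum_apply,
    Finset.sum_mul]
  rw [Finset.sum_comm]

lemma inv_symm (hS : S.PosDef) : S⁻¹ᵀ = S⁻¹ := by
  have h := hS.inv.1
  ext i j
  have := congrFun (congrFun h i) j
  simpa using this

lemma quad_symm (hS : S.PosDef) (u v : Fin n → ℝ) :
    u ⬝ᵥ (S⁻¹ *ᵥ v) = v ⬝ᵥ (S⁻¹ *ᵥ u) := by
  have hsymm : ∀ i j, S⁻¹ i j = S⁻¹ j i := by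
    intro i j
    have := congrFun (congrFun (inv_symm hS) j) i
    simpa [Matrix.transpose] using this
  simp only [dotProduct, Matrix.mulVec, Finset.mul_sum]
  rw [Finset.sum_comm]
  refine Finset.sum_congr rfl fun i _ => Finset.sum_congr rfl fun j _ => ?_
  rw [hsymm j i]; ring

lemma quad_nonneg (hS : S.PosDef) (v : Fin n → ℝ) : 0 ≤ v ⬝ᵥ (S⁻¹ *ᵥ v) := by
  rcases eq_or_ne v 0 with rfl | hv
  · simp
  · have := hS.inv.dotProduct_mulVec_pos hv
    have h2 : star v = v := rfl
    rw [h2] at this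
    exact this.le

lemma quad_pos (hS : S.PosDef) {v : Fin n → ℝ} (hv : v ≠ 0) : 0 < v ⬝ᵥ (S⁻¹ *ᵥ v) := by
  have := hS.inv.dotProduct_mulVec_pos hv
  have h2 : star v = v := rfl
  rw [h2] at this
  exact this

lemma normConst_pos (hS : S.PosDef) : 0 < Real.sqrt ((2 * Real.pi) ^ n * S.det) := by
  apply Real.sqrt_pos.mpr
  exact mul_pos (pow_pos (by positivity) n) hS.det_pos

lemma gaussDensity_pos (hS : S.PosDef) (ε : Fin n → ℝ) : 0 < gaussDensity n S ε := by
  unfold gaussDensity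
  exact mul_pos (inv_pos.mpr (normConst_pos hS)) (Real.exp_pos _)

lemma gaussDensity_continuous (hS : S.PosDef) : Continuous (gaussDensity n S) := by
  unfold gaussDensity
  apply Continuous.mul continuous_const
  apply Real.continuous_exp.comp
  apply Continuous.div_const
  apply Continuous.neg
  simp only [dotProduct, Matrix.mulVec]
  exact continuous_finset_sum _ fun i _ => (continuous_apply i).mul
    (continuous_finset_sum _ fun j _ => continuous_const.mul (continuous_apply j))

/-- The shift formula for the Gaussian density. -/
lemma gaussDensity_shift (hS : S.PosDef) (μ ε : Fin n → ℝ) :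
    gaussDensity n S (ε - μ) =
      gaussDensity n S ε * Real.exp (ε ⬝ᵥ (S⁻¹ *ᵥ μ) - μ ⬝ᵥ (S⁻¹ *ᵥ μ) / 2) := by
  unfold gaussDensity
  have hq : (ε - μ) ⬝ᵥ (S⁻¹ *ᵥ (ε - μ)) =
      ε ⬝ᵥ (S⁻¹ *ᵥ ε) - 2 * (ε ⬝ᵥ (S⁻¹ *ᵥ μ)) + μ ⬝ᵥ (S⁻¹ *ᵥ μ) := by
    rw [Matrix.mulVec_sub, sub_dotProduct, dotProduct_sub,
      dotProduct_sub, quad_symm hS μ ε]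
    ring
  rw [mul_assoc, ← Real.exp_add]
  congr 1
  rw [hq]
  ring

/-- Normalization and integrability of the Gaussian density. -/
lemma gauss_integral (hS : S.PosDef) :
    Integrable (gaussDensity n S) ∧ ∫ ε, gaussDensity n S ε = 1 := by
  classical
  set T := (open scoped MatrixOrder in CFC.sqrt S) with hTdef
  have hTT : T * T = S := by
    open scoped MatrixOrder in exact CFC.sqrt_mul_sqrt_self S hS.posSemidef.nonneg
  have hTdet : T.det * T.det = S.det := by rw [← Matrix.det_mul, hTT]
  have hdetS : 0 < S.det := hS.det_pos
  have hTdet_ne : T.det ≠ 0 := by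
    intro h
    rw [h, mul_zero] at hTdet
    exact hdetS.ne' hTdet.symm
  have hTunit : IsUnit T.det := isUnit_iff_ne_zero.mpr hTdet_ne
  have hTsymm : Tᵀ = T := by
    have h := (open scoped MatrixOrder in (CFC.sqrt_nonneg S).posSemidef.1)
    ext i j
    have := congrFun (congrFun h i) j
    simpa using this
  have hSinv : S⁻¹ = T⁻¹ * T⁻¹ := by rw [← hTT, Matrix.mul_inv_rev]
  have hTi1 : T * T⁻¹ = 1 := Matrix.mul_nonsing_inv T hTunit
  have hTi2 : T⁻¹ * T = 1 := Matrix.nonsing_inv_mul T hTunit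
  have hTST : T * S⁻¹ * T = 1 := by
    have hassoc : T * (T⁻¹ * T⁻¹) * T = (T * T⁻¹) * (T⁻¹ * T) := by noncomm_ring
    rw [hSinv, hassoc, hTi1, hTi2, one_mul]
  have hquad : ∀ v : Fin n → ℝ, (T *ᵥ v) ⬝ᵥ (S⁻¹ *ᵥ (T *ᵥ v)) = v ⬝ᵥ v := by
    intro v
    rw [Matrix.mulVec_mulVec, Matrix.dotProduct_mulVec, ← Matrix.mulVec_transpose,
      Matrix.mulVec_mulVec, Matrix.transpose_mul, hTsymm, inv_symm hS, hTST,
      Matrix.one_mulVec]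
  -- 1-D Gaussian
  have h1dInt : Integrable (fun x : ℝ => Real.exp (-(2⁻¹ : ℝ) * x ^ 2)) :=
    integrable_exp_neg_mul_sq (by norm_num)
  have h1dVal : ∫ x : ℝ, Real.exp (-(2⁻¹ : ℝ) * x ^ 2) = Real.sqrt (2 * Real.pi) := by
    rw [integral_gaussian]
    congr 1
    rw [div_eq_mul_inv, inv_inv]
    ring
  -- the composed function
  set C := Real.sqrt ((2 * Real.pi) ^ n * S.det) with hCdef
  have hCpos : 0 < C := normConst_pos hS
  have hcomp : ∀ v : Fin n → ℝ,
      gaussDensity n S (T *ᵥ v) = C⁻¹ * ∏ i, Real.exp (-(2⁻¹ : ℝ) * (v i) ^ 2) := by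
    intro v
    unfold gaussDensity
    rw [hquad]
    congr 1
    rw [← Real.exp_sum]
    congr 1
    simp only [dotProduct]
    rw [neg_div, Finset.sum_div, ← Finset.sum_neg_distrib]
    refine Finset.sum_congr rfl fun i _ => ?_
    ring
  have hcompInt : Integrable (fun v : Fin n → ℝ => gaussDensity n S (T *ᵥ v)) := by
    have : Integrable (fun v : Fin n → ℝ => ∏ i, Real.exp (-(2⁻¹ : ℝ) * (v i) ^ 2)) :=
      Integrable.fintype_prod (fun _ => h1dInt)
    have h2 := this.const_mul C⁻¹
    refine h2.congr ?_
    filter_upwards with v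
    rw [hcomp v]
  have hcompVal : ∫ v : Fin n → ℝ, gaussDensity n S (T *ᵥ v)
      = C⁻¹ * (Real.sqrt (2 * Real.pi)) ^ n := by
    calc ∫ v : Fin n → ℝ, gaussDensity n S (T *ᵥ v)
        = ∫ v : Fin n → ℝ, C⁻¹ * ∏ i, Real.exp (-(2⁻¹ : ℝ) * (v i) ^ 2) := by
          refine integral_congr_ae ?_
          filter_upwards with v
          rw [hcomp v]
      _ = C⁻¹ * ∫ v : Fin n → ℝ, ∏ i, Real.exp (-(2⁻¹ : ℝ) * (v i) ^ 2) := by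
          rw [integral_const_mul]
      _ = C⁻¹ * (∫ x : ℝ, Real.exp (-(2⁻¹ : ℝ) * x ^ 2)) ^ (Fintype.card (Fin n)) := by
          rw [MeasureTheory.volume_pi, MeasureTheory.integral_fintype_prod_eq_pow (ι := Fin n)
            (fun t : ℝ => Real.exp (-(2⁻¹ : ℝ) * t ^ 2))]
      _ = C⁻¹ * (Real.sqrt (2 * Real.pi)) ^ n := by rw [h1dVal, Fintype.card_fin]
  -- change of variables
  have hφcont : Continuous (Matrix.toLin' T) := LinearMap.continuous_of_finiteDimensional _
  have hmap : Measure.map (Matrix.toLin' T) volume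
      = ENNReal.ofReal |T.det|⁻¹ • volume := by
    have := Real.map_matrix_volume_pi_eq_smul_volume_pi (M := T) hTdet_ne
    rw [this]
    congr 1
    rw [abs_inv]
  have hGsm : AEStronglyMeasurable (gaussDensity n S)
      (Measure.map (Matrix.toLin' T) volume) :=
    (gaussDensity_continuous hS).aestronglyMeasurable
  have hmapint : ∫ y, gaussDensity n S y ∂(Measure.map (Matrix.toLin' T) volume)
      = ∫ v, gaussDensity n S (Matrix.toLin' T v) :=
    integral_map hφcont.measurable.aemeasurable hGsm
  have htoLin : ∀ v, Matrix.toLin' T v = T *ᵥ v := fun v => Matrix.toLin'_apply T v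
  have habs_ne : |T.det| ≠ 0 := abs_ne_zero.mpr hTdet_ne
  have habs_pos : 0 < |T.det| := abs_pos.mpr hTdet_ne
  have hsmul : ∫ y, gaussDensity n S y ∂(ENNReal.ofReal |T.det|⁻¹ • volume)
      = |T.det|⁻¹ * ∫ y, gaussDensity n S y := by
    rw [integral_smul_measure, ENNReal.toReal_ofReal (by positivity), smul_eq_mul]
  have hCval : C = (Real.sqrt (2 * Real.pi)) ^ n * |T.det| := by
    rw [hCdef, Real.sqrt_mul (by positivity), sqrt_pow' (by positivity), ← hTdet,
      Real.sqrt_mul_self_eq_abs]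
  have key : |T.det|⁻¹ * ∫ y, gaussDensity n S y = C⁻¹ * (Real.sqrt (2 * Real.pi)) ^ n := by
    rw [← hsmul, ← hmap, hmapint]
    rw [← hcompVal]
    refine integral_congr_ae ?_
    filter_upwards with v
    rw [htoLin v]
  constructor
  · -- integrability
    have h1 : Integrable (gaussDensity n S) (Measure.map (Matrix.toLin' T) volume) := by
      rw [integrable_map_measure hGsm hφcont.measurable.aemeasurable]
      refine hcompInt.congr ?_
      filter_upwards with v
      rw [Function.comp_apply, htoLin v]
    rw [hmap] at h1
    exact (integrable_smul_measure (by simp [hTdet_ne]) (by simp)).mp h1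
  · have hsqrt2pi_pos : (0:ℝ) < Real.sqrt (2 * Real.pi) := Real.sqrt_pos.mpr (by positivity)
    have := key
    rw [hCval] at this
    field_simp at this
    -- this : ∫ ... * ... = ...  solve for integral
    have hne1 : ((Real.sqrt (2 * Real.pi)) ^ n : ℝ) ≠ 0 := by positivity
    nlinarith [this, habs_pos, pow_pos hsqrt2pi_pos n]

/-- Core scalar inequality: `e^w - 1 ≤ (r/e) e^{(1+1/r)w}`. -/
lemma core_exp_ineq {r w : ℝ} (hr : 0 < r) :
    Real.exp w - 1 ≤ r * Real.exp ((1 + 1/r) * w - 1) := by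
  rcases le_total w 0 with hw | hw
  · have h1 : Real.exp w ≤ 1 := Real.exp_le_one_iff.mpr hw
    have h2 : 0 < r * Real.exp ((1 + 1/r) * w - 1) := by positivity
    linarith
  · have h1 : Real.exp w - 1 ≤ w * Real.exp w := by
      have h := Real.add_one_le_exp (-w)
      have hpos := Real.exp_pos w
      have hinv : Real.exp (-w) * Real.exp w = 1 := by
        rw [← Real.exp_add]; simp
      nlinarith [mul_le_mul_of_nonneg_right h hpos.le]
    have h2 : w ≤ r * Real.exp (w / r - 1) := by
      have h := Real.add_one_le_exp (w / r - 1)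
      have : w / r ≤ Real.exp (w / r - 1) := by linarith
      calc w = r * (w / r) := by field_simp
        _ ≤ r * Real.exp (w / r - 1) := by
            exact mul_le_mul_of_nonneg_left this hr.le
    calc Real.exp w - 1 ≤ w * Real.exp w := h1
      _ ≤ (r * Real.exp (w / r - 1)) * Real.exp w := by
          exact mul_le_mul_of_nonneg_right h2 (Real.exp_pos w).le
      _ = r * Real.exp ((1 + 1/r) * w - 1) := by
          rw [mul_assoc, ← Real.exp_add]
          congr 2
          field_simp
          ring

/-- Exponential-form inequality used for the pointwise density bound. -/
lemma core_density_ineq {a r z : ℝ} (hr : 0 < r) (hra : a = r ^ 2) :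
    Real.exp (z - a / 2) - 1 ≤
      (r * Real.exp ((r - 1) / 2)) *
        Real.exp ((1 + 1/r) * z - (1 + 1/r) ^ 2 * a / 2) := by
  have h := core_exp_ineq (r := r) (w := z - a / 2) hr
  refine h.trans (le_of_eq ?_)
  rw [mul_assoc, ← Real.exp_add]
  congr 2
  subst hra
  field_simp
  ring

variable (S)

/-- Key smoothing-Lipschitz step: the smoothed value moves by at most `‖δ‖_{Σ,2}`. -/
lemma smoothed_step (hS : S.PosDef) {F : (Fin n → ℝ) → ℝ} (hF : Measurable F)
    (hF01 : ∀ v, F v ∈ Set.Icc (0:ℝ) 1) (y δ : Fin n → ℝ) :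
    (∫ ε, F (y + δ + ε) * gaussDensity n S ε) - (∫ ε, F (y + ε) * gaussDensity n S ε)
      ≤ Real.sqrt (δ ⬝ᵥ (S⁻¹ *ᵥ δ)) := by
  obtain ⟨Ig, hI1⟩ := gauss_integral hS
  have hppos := gaussDensity_pos hS
  have hpmeas : Measurable (gaussDensity n S) := (gaussDensity_continuous hS).measurable
  -- generic integrability
  have hInt : ∀ (b μ : Fin n → ℝ),
      Integrable (fun ε => F (b + ε) * gaussDensity n S (ε - μ)) := by
    intro b μ
    have hm : Measurable fun ε => F (b + ε) * gaussDensity n S (ε - μ) :=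
      (hF.comp (measurable_const.add measurable_id)).mul
        (hpmeas.comp (measurable_id.sub measurable_const))
    refine Integrable.mono (Ig.comp_sub_right μ) hm.aestronglyMeasurable ?_
    filter_upwards with ε
    have h0 := (hF01 (b + ε)).1
    have h1 := (hF01 (b + ε)).2
    have hp := (hppos (ε - μ)).le
    rw [Real.norm_eq_abs, Real.norm_eq_abs, abs_of_nonneg (mul_nonneg h0 hp),
      abs_of_nonneg hp]
    nlinarith
  have hInt0 : ∀ (b : Fin n → ℝ), Integrable (fun ε => F (b + ε) * gaussDensity n S ε) := by
    intro b
    have := hInt b 0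
    simpa using this
  rcases eq_or_ne δ 0 with rfl | hδ0
  · simp
  have ha : 0 < δ ⬝ᵥ (S⁻¹ *ᵥ δ) := quad_pos hS hδ0
  set a := δ ⬝ᵥ (S⁻¹ *ᵥ δ) with hadef
  set r := Real.sqrt a with hrdef
  have hr : 0 < r := Real.sqrt_pos.mpr ha
  have hra : a = r ^ 2 := (Real.sq_sqrt ha.le).symm
  -- translation step
  have htrans : (∫ ε, F (y + δ + ε) * gaussDensity n S ε)
      = ∫ ε, F (y + ε) * gaussDensity n S (ε - δ) := by
    have e1 : (fun ε => F (y + δ + ε) * gaussDensity n S ε)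
        = (fun ε => F (y + (ε + δ)) * gaussDensity n S (ε + δ - δ)) := by
      funext ε
      have h1 : y + δ + ε = y + (ε + δ) := by abel
      rw [h1, add_sub_cancel_right]
    rw [e1]
    exact integral_add_right_eq_self (fun ε => F (y + ε) * gaussDensity n S (ε - δ)) δ
  rcases le_total 1 r with hr1 | hr1
  · -- trivial bound
    have hub : (∫ ε, F (y + δ + ε) * gaussDensity n S ε) ≤ 1 := by
      rw [← hI1]
      refine integral_mono (hInt0 (y + δ)) Ig ?_
      intro ε
      have h1 := (hF01 (y + δ + ε)).2
      have hp := (hppos ε).le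
      show F (y + δ + ε) * gaussDensity n S ε ≤ gaussDensity n S ε
      nlinarith [mul_nonneg (sub_nonneg.mpr h1) hp]
    have hlb : 0 ≤ ∫ ε, F (y + ε) * gaussDensity n S ε := by
      refine integral_nonneg fun ε => mul_nonneg (hF01 (y + ε)).1 (hppos ε).le
    linarith
  · -- analytic bound
    set s := 1 + 1/r with hsdef
    set c := r * Real.exp ((r - 1) / 2) with hcdef
    have hcpos : 0 < c := by positivity
    have hcr : c ≤ r := by
      have : Real.exp ((r - 1) / 2) ≤ 1 := Real.exp_le_one_iff.mpr (by linarith)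
      nlinarith
    -- pointwise bound
    have hpt : ∀ ε, F (y + ε) * (gaussDensity n S (ε - δ) - gaussDensity n S ε)
        ≤ c * gaussDensity n S (ε - s • δ) := by
      intro ε
      set z := ε ⬝ᵥ (S⁻¹ *ᵥ δ) with hzdef
      have hs1 : gaussDensity n S (ε - δ)
          = gaussDensity n S ε * Real.exp (z - a / 2) := gaussDensity_shift hS δ ε
      have hsm1 : ε ⬝ᵥ (S⁻¹ *ᵥ (s • δ)) = s * z := by
        rw [Matrix.mulVec_smul, dotProduct_smul, smul_eq_mul]
      have hsm2 : (s • δ) ⬝ᵥ (S⁻¹ *ᵥ (s • δ)) = s ^ 2 * a := by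
        rw [Matrix.mulVec_smul, dotProduct_smul, smul_dotProduct,
          smul_eq_mul, smul_eq_mul, hadef]
        ring
      have hs2 : gaussDensity n S (ε - s • δ)
          = gaussDensity n S ε * Real.exp (s * z - s ^ 2 * a / 2) := by
        rw [gaussDensity_shift hS (s • δ) ε, hsm1, hsm2]
      have hcore := core_density_ineq (a := a) (r := r) (z := z) hr hra
      rw [hs1, hs2]
      set P := gaussDensity n S ε with hPdef
      have hP : 0 < P := hppos ε
      have hF0 := (hF01 (y + ε)).1
      have hF1 := (hF01 (y + ε)).2
      set E1 := Real.exp (z - a / 2)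
      set E2 := Real.exp ((1 + 1/r) * z - (1 + 1/r) ^ 2 * a / 2)
      have hE2 : 0 < E2 := Real.exp_pos _
      -- goal : F * (P * E1 - P) ≤ c * (P * E2)
      rcases le_total E1 1 with hE1 | hE1
      · have hle : F (y + ε) * (P * E1 - P) ≤ 0 := by
          have hx : P * E1 - P ≤ 0 := by
            have := mul_le_mul_of_nonneg_left hE1 hP.le
            linarith [this]
          exact mul_nonpos_of_nonneg_of_nonpos hF0 hx
        have : 0 ≤ c * (P * E2) := by positivity
        calc F (y + ε) * (P * E1 - P) ≤ 0 := hle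
          _ ≤ c * (P * (Real.exp (s * z - s ^ 2 * a / 2))) := by
              have : (0:ℝ) ≤ c * (P * Real.exp (s * z - s ^ 2 * a / 2)) := by positivity
              exact this
      · have h1 : F (y + ε) * (P * E1 - P) ≤ P * E1 - P := by
          have hx : 0 ≤ P * E1 - P := by
            have := mul_le_mul_of_nonneg_left hE1 hP.le
            linarith [this]
          nlinarith [mul_nonneg (sub_nonneg.mpr hF1) hx]
        rw [← hcdef] at hcore
        have h2 : P * E1 - P ≤ c * (P * E2) := by
          have hmul := mul_le_mul_of_nonneg_left hcore hP.le
          calc P * E1 - P = P * (E1 - 1) := by ring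
            _ ≤ P * (c * E2) := hmul
            _ = c * (P * E2) := by ring
        have h3 : E2 = Real.exp (s * z - s ^ 2 * a / 2) := by rw [hsdef]
        calc F (y + ε) * (P * E1 - P) ≤ P * E1 - P := h1
          _ ≤ c * (P * E2) := h2
          _ = c * (P * Real.exp (s * z - s ^ 2 * a / 2)) := by rw [h3]
    -- integrate
    have hIδ := hInt y δ
    have hI0 := hInt0 y
    have hIs : Integrable (fun ε => c * gaussDensity n S (ε - s • δ)) :=
      (Ig.comp_sub_right (s • δ)).const_mul c
    have hintle : (∫ ε, F (y + ε) * gaussDensity n S (ε - δ))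
        - (∫ ε, F (y + ε) * gaussDensity n S ε)
        ≤ c := by
      have hsub : (∫ ε, F (y + ε) * gaussDensity n S (ε - δ))
          - (∫ ε, F (y + ε) * gaussDensity n S ε)
          = ∫ ε, F (y + ε) * (gaussDensity n S (ε - δ) - gaussDensity n S ε) := by
        rw [← integral_sub hIδ hI0]
        refine integral_congr_ae ?_
        filter_upwards with ε
        ring
      rw [hsub]
      have hmono : (∫ ε, F (y + ε) * (gaussDensity n S (ε - δ) - gaussDensity n S ε))
          ≤ ∫ ε, c * gaussDensity n S (ε - s • δ) := by
        refine integral_mono (by exact (hIδ.sub hI0).congr (by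
          filter_upwards with ε
          simp only [Pi.sub_apply]
          ring)) hIs hpt
      have hval : (∫ ε, c * gaussDensity n S (ε - s • δ)) = c := by
        rw [integral_const_mul]
        have : (∫ ε, gaussDensity n S (ε - s • δ)) = ∫ ε, gaussDensity n S ε :=
          integral_sub_right_eq_self (gaussDensity n S) (s • δ)
        rw [this, hI1, mul_one]
      linarith
    rw [htrans]
    linarith

end GaussCertAux

open GaussCertAux in
/-- certificate for Gaussian-mixture smoothed classifiers: with
`B⁻¹ = Σⱼ αⱼ Σⱼ⁻¹`, the top class `cA` at `x` is preserved for every `δ` with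
`√(δᵀB⁻¹δ) ≤ (1/√(2π)) (g^{cA}(x) − max_{c ≠ cA} g^c(x))`. -/
theorem gaussian_mixture_smoothing_certificate (n K : ℕ)
    (Sigs : Fin K → Matrix (Fin n) (Fin n) ℝ) (hSigs : ∀ j, (Sigs j).PosDef)
    (α : Fin K → ℝ) (hα : ∀ j, α j ∈ Set.Ioc (0:ℝ) 1) (hsum : ∑ j, α j = 1)
    (f : (Fin n → ℝ) → Fin K → ℝ) (hf : Measurable f)
    (hf01 : ∀ v i, f v i ∈ Set.Icc (0:ℝ) 1)
    (gG : (Fin n → ℝ) → Fin K → ℝ)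
    (hgG : ∀ x i, gG x i = ∑ j, α j * ∫ ε, f (x + ε) i * gaussDensity n (Sigs j) ε)
    (x : Fin n → ℝ) (cA : Fin K) (hcA : ∀ i, gG x i ≤ gG x cA)
    (hne : (Finset.univ.erase cA).Nonempty)
    (δ : Fin n → ℝ)
    (hδ : Real.sqrt (δ ⬝ᵥ ((∑ j, α j • (Sigs j)⁻¹) *ᵥ δ)) ≤
      (Real.sqrt (2 * Real.pi))⁻¹ *
        (gG x cA - (Finset.univ.erase cA).sup' hne (fun c => gG x c))) :
    ∀ c, c ≠ cA → gG (x + δ) c ≤ gG (x + δ) cA := by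
  intro c hc
  classical
  set R := Real.sqrt (δ ⬝ᵥ ((∑ j, α j • (Sigs j)⁻¹) *ᵥ δ)) with hRdef
  set M := gG x cA - (Finset.univ.erase cA).sup' hne (fun c => gG x c) with hMdef
  have hR0 : 0 ≤ R := Real.sqrt_nonneg _
  -- r_j
  set rj : Fin K → ℝ := fun j => Real.sqrt (δ ⬝ᵥ ((Sigs j)⁻¹ *ᵥ δ)) with hrjdef
  have hrj0 : ∀ j, 0 ≤ rj j := fun j => Real.sqrt_nonneg _
  -- quadratic form expansion
  have hquad : δ ⬝ᵥ ((∑ j, α j • (Sigs j)⁻¹) *ᵥ δ) = ∑ j, α j * (rj j) ^ 2 := by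
    rw [sum_mulVec', dotProduct_sum']
    refine Finset.sum_congr rfl fun j _ => ?_
    rw [show (α j • (Sigs j)⁻¹) *ᵥ δ = α j • ((Sigs j)⁻¹ *ᵥ δ) from
      Matrix.smul_mulVec (α j) _ δ, dotProduct_smul]
    rw [hrjdef]
    rw [Real.sq_sqrt (quad_nonneg (hSigs j) δ)]
    simp [smul_eq_mul]
  -- Cauchy-Schwarz : ∑ α r ≤ R
  have hCS : ∑ j, α j * rj j ≤ R := by
    have hcs := Finset.sum_mul_sq_le_sq_mul_sq Finset.univ
      (fun j => Real.sqrt (α j)) (fun j => Real.sqrt (α j) * rj j)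
    have he : ∀ j : Fin K, Real.sqrt (α j) * (Real.sqrt (α j) * rj j) = α j * rj j := by
      intro j
      rw [← mul_assoc, Real.mul_self_sqrt (hα j).1.le]
    have he2 : ∀ j : Fin K, (Real.sqrt (α j)) ^ 2 = α j := fun j =>
      Real.sq_sqrt (hα j).1.le
    have he3 : ∀ j : Fin K, (Real.sqrt (α j) * rj j) ^ 2 = α j * (rj j) ^ 2 := by
      intro j
      rw [mul_pow, he2 j]
    rw [Finset.sum_congr rfl (fun j _ => he j), Finset.sum_congr rfl (fun j _ => he2 j),
      Finset.sum_congr rfl (fun j _ => he3 j), hsum, one_mul] at hcs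
    have hsum0 : 0 ≤ ∑ j, α j * rj j :=
      Finset.sum_nonneg fun j _ => mul_nonneg (hα j).1.le (hrj0 j)
    have hR2 : R ^ 2 = ∑ j, α j * (rj j) ^ 2 := by
      rw [hRdef, Real.sq_sqrt, hquad]
      rw [hquad]
      exact Finset.sum_nonneg fun j _ => mul_nonneg (hα j).1.le (sq_nonneg _)
    nlinarith [hcs, hsum0, hR0]
  -- per-class Lipschitz bounds
  have hFmeas : ∀ i : Fin K, Measurable (fun v => f v i) := fun i =>
    (measurable_pi_apply i).comp hf
  have hup : ∀ i : Fin K, gG (x + δ) i - gG x i ≤ R := by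
    intro i
    have : gG (x + δ) i - gG x i ≤ ∑ j, α j * rj j := by
      rw [hgG (x + δ) i, hgG x i, ← Finset.sum_sub_distrib]
      refine Finset.sum_le_sum fun j _ => ?_
      rw [← mul_sub]
      refine mul_le_mul_of_nonneg_left ?_ (hα j).1.le
      exact smoothed_step (Sigs j) (hSigs j) (hFmeas i) (fun v => hf01 v i) x δ
    linarith
  have hdown : ∀ i : Fin K, gG x i - gG (x + δ) i ≤ R := by
    intro i
    have : gG x i - gG (x + δ) i ≤ ∑ j, α j * rj j := by
      rw [hgG (x + δ) i, hgG x i, ← Finset.sum_sub_distrib]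
      refine Finset.sum_le_sum fun j _ => ?_
      rw [← mul_sub]
      refine mul_le_mul_of_nonneg_left ?_ (hα j).1.le
      have h := smoothed_step (Sigs j) (hSigs j) (hFmeas i) (fun v => hf01 v i)
        (x + δ) (-δ)
      have he : x + δ + -δ = x := by abel
      rw [he] at h
      have hq : (-δ) ⬝ᵥ ((Sigs j)⁻¹ *ᵥ (-δ)) = δ ⬝ᵥ ((Sigs j)⁻¹ *ᵥ δ) := by
        rw [Matrix.mulVec_neg, neg_dotProduct, dotProduct_neg, neg_neg]
      rw [hq] at h
      exact h
    linarith
  -- margin facts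
  have hMc : gG x c ≤ gG x cA - M := by
    have : gG x c ≤ (Finset.univ.erase cA).sup' hne (fun c => gG x c) :=
      Finset.le_sup' _ (Finset.mem_erase.mpr ⟨hc, Finset.mem_univ c⟩)
    rw [hMdef]; linarith
  have hM0 : 0 ≤ M := by
    have : (Finset.univ.erase cA).sup' hne (fun c => gG x c) ≤ gG x cA :=
      Finset.sup'_le _ _ fun i _ => hcA i
    rw [hMdef]; linarith
  -- √(2π) ≥ 2
  have hsqrt2 : (2:ℝ) ≤ Real.sqrt (2 * Real.pi) := by
    have h4 : (4:ℝ) ≤ 2 * Real.pi := by nlinarith [Real.pi_gt_three]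
    have hs := Real.sqrt_le_sqrt h4
    have h2 : Real.sqrt 4 = 2 := by
      rw [show (4:ℝ) = 2 ^ 2 by norm_num, Real.sqrt_sq (by norm_num : (0:ℝ) ≤ 2)]
    linarith
  have hsqrtpos : (0:ℝ) < Real.sqrt (2 * Real.pi) := by linarith
  have h2RM : 2 * R ≤ M := by
    have h1 : Real.sqrt (2 * Real.pi) * R ≤ M := by
      have := mul_le_mul_of_nonneg_left hδ hsqrtpos.le
      rw [← mul_assoc, mul_inv_cancel₀ hsqrtpos.ne', one_mul] at this
      exact this
    nlinarith
  -- conclude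
  have h1 : gG (x + δ) c ≤ gG x c + R := by linarith [hup c]
  have h2 : gG x cA - R ≤ gG (x + δ) cA := by linarith [hdown cA]
  linarith
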